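/- Let I = ⊕_{n≥0} ℂΩ_n (orthonormal vectors Ω_n, Ω_0 = Ω) and let A* = L_{(1)}(I) be the space of all degree-one linear maps on I. Suppose a*: H → A* is a surjective linear map from a pre-Hilbert space H. Then the map Λ : F(H) → I determined by Λ(x_n ⊗ ⋯ ⊗ x_1) = a*(x_n)⋯a*(x_1)Ω has no weak adjoint: there is no map Λ* : I → F(H)‾ with ⟨ΛX, Y⟩ = ⟨X, Λ*Y⟩ for all X ∈ F(H), Y ∈ I. -/

import Mathlib

open scoped InnerProductSpace

/-- Let `I = ⊕ₙ ℂ Ωₙ` be a pre-Hilbert space with orthonormal Hamel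
basis `(Ωₙ)_{n≥0}` (`Ω₀ = Ω` the vacuum), and let `A* = L₍₁₎(I)` be **all** degree-one
linear maps on `I` (those with `c Ωₙ ∈ ℂ Ω_{n+1}`).  Suppose `a* : H → A*` is a
surjective linear map from a pre-Hilbert space `H` into the operators on `I`, with range
exactly the degree-one maps.  Let `F = F(H) = ⊕ₙ H^{⊗n}` be the algebraic full Fock
space over `H` (given abstractly by the maps `τ n : (x₁,…,xₙ) ↦ xₙ ⊗ ⋯ ⊗ x₁` with
`⟨τ x, τ y⟩ = ∏ᵢ ⟨xᵢ, yᵢ⟩`, different grades orthogonal, and total), and let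
`Λ : F → I` be determined by `Λ(xₙ ⊗ ⋯ ⊗ x₁) = a*(xₙ)⋯a*(x₁)Ω`.  Then `Λ` has no weak
adjoint: there is no linear `Λ* : I → F̄` (with `F̄` the completion of `F`, embedded via
the dense isometry `ιF`) satisfying `⟨Λ X, Y⟩ = ⟨X, Λ* Y⟩` for all `X ∈ F`, `Y ∈ I`. -/
theorem full_interacting_Fock_not_regular
    {I : Type*} [NormedAddCommGroup I] [InnerProductSpace ℂ I]
    (Ω : ℕ → I) (hΩ : Orthonormal ℂ Ω)
    (hspanI : Submodule.span ℂ (Set.range Ω) = ⊤)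
    {H : Type*} [NormedAddCommGroup H] [InnerProductSpace ℂ H]
    (astar : H →ₗ[ℂ] (I →ₗ[ℂ] I))
    (hdeg : ∀ (x : H) (n : ℕ), ∃ z : ℂ, astar x (Ω n) = z • Ω (n + 1))
    (hsurj : ∀ c : I →ₗ[ℂ] I,
      (∀ n : ℕ, ∃ z : ℂ, c (Ω n) = z • Ω (n + 1)) → ∃ x : H, astar x = c)
    {F : Type*} [NormedAddCommGroup F] [InnerProductSpace ℂ F]
    (τ : ∀ n : ℕ, (Fin n → H) → F)
    (hinner : ∀ (n : ℕ) (x y : Fin n → H),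
      ⟪τ n x, τ n y⟫_ℂ = ∏ i, ⟪x i, y i⟫_ℂ)
    (horth : ∀ (m n : ℕ) (x : Fin m → H) (y : Fin n → H), m ≠ n → ⟪τ m x, τ n y⟫_ℂ = 0)
    (htotal : Submodule.span ℂ {v : F | ∃ n x, v = τ n x} = ⊤)
    (Λ : F →ₗ[ℂ] I)
    (hΛ0 : Λ (τ 0 (fun i => i.elim0)) = Ω 0)
    (hΛrec : ∀ (n : ℕ) (x : Fin (n + 1) → H),
      Λ (τ (n + 1) x) = astar (x 0) (Λ (τ n (fun i => x i.succ))))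
    {Fb : Type*} [NormedAddCommGroup Fb] [InnerProductSpace ℂ Fb] [CompleteSpace Fb]
    (ιF : F →ₗᵢ[ℂ] Fb) (hdense : DenseRange ιF) :
    ¬ ∃ Λs : I →ₗ[ℂ] Fb, ∀ (X : F) (Y : I), ⟪Λ X, Y⟫_ℂ = ⟪ιF X, Λs Y⟫_ℂ := by
  rintro ⟨Λs, hΛs⟩
  -- the positive sequence p
  set p : ℕ → ℝ := fun n => (n : ℝ) ^ n * ‖Λs (Ω n)‖ + 1 with hp_def
  have hp : ∀ n, 0 < p n := by
    intro n; have := norm_nonneg (Λs (Ω n)); positivity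
  -- basis of I
  have hle : ⊤ ≤ Submodule.span ℂ (Set.range Ω) := hspanI.ge
  let b : Module.Basis ℕ ℂ I := Module.Basis.mk hΩ.linearIndependent hle
  have hb : ∀ n, b n = Ω n := fun n => Module.Basis.mk_apply _ _ _
  -- the degree one operator c
  set coef : ℕ → ℂ := fun n => ((p (n + 1) / p n : ℝ) : ℂ) with hcoef_def
  let c : I →ₗ[ℂ] I := b.constr ℂ (fun n => coef n • Ω (n + 1))
  have hc : ∀ n, c (Ω n) = coef n • Ω (n + 1) := by
    intro n
    have := Module.Basis.constr_basis b ℂ (fun n => coef n • Ω (n + 1)) n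
    rwa [hb] at this
  obtain ⟨x, hx⟩ := hsurj c (fun n => ⟨coef n, hc n⟩)
  -- the key induction
  have key : ∀ n, Λ (τ n (fun _ => x)) = ((p n / p 0 : ℝ) : ℂ) • Ω n := by
    intro n
    induction n with
    | zero =>
      have : ((p 0 / p 0 : ℝ) : ℂ) = 1 := by
        rw [div_self (hp 0).ne']; norm_num
      rw [this, one_smul,
        show (fun _ : Fin 0 => x) = (fun i : Fin 0 => i.elim0) from funext fun i => i.elim0]
      exact hΛ0
    | succ n ih =>
      have hrec := hΛrec n (fun _ => x)
      rw [hrec, hx, ih, map_smul, hc n, smul_smul]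
      congr 1
      rw [hcoef_def]
      have hreq : p n / p 0 * (p (n + 1) / p n) = p (n + 1) / p 0 := by
        rw [div_mul_div_comm, mul_comm (p n), mul_div_mul_right _ _ (hp n).ne']
      rw [← Complex.ofReal_mul, hreq]
  -- norm of τ n (const x)
  have hnorm : ∀ n, ‖τ n (fun _ => x)‖ = ‖x‖ ^ n := by
    intro n
    have h1 : ⟪τ n (fun _ => x), τ n (fun _ => x)⟫_ℂ = ((‖x‖ ^ n : ℝ) ^ 2 : ℂ) := by
      rw [hinner]
      have : ∀ i : Fin n, ⟪(fun _ : Fin n => x) i, (fun _ : Fin n => x) i⟫_ℂ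
          = ((‖x‖ ^ 2 : ℝ) : ℂ) := by
        intro i
        rw [@inner_self_eq_norm_sq_to_K ℂ]
        norm_cast
      rw [Finset.prod_congr rfl (fun i _ => this i), Finset.prod_const]
      push_cast
      rw [Finset.card_univ, Fintype.card_fin]
      ring
    rw [@inner_self_eq_norm_sq_to_K ℂ] at h1
    have h2 : ‖τ n (fun _ => x)‖ ^ 2 = (‖x‖ ^ n) ^ 2 := by
      have h2' := h1; norm_cast at h2'; exact RCLike.ofReal_inj.mp h2'
    nlinarith [norm_nonneg (τ n (fun _ => x)), pow_nonneg (norm_nonneg x) n,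
      sq_nonneg (‖τ n (fun _ => x)‖ - ‖x‖ ^ n), sq_nonneg (‖τ n (fun _ => x)‖ + ‖x‖ ^ n)]
  -- the fundamental bound
  have bound : ∀ n, p n / p 0 ≤ ‖x‖ ^ n * ‖Λs (Ω n)‖ := by
    intro n
    have hin : ⟪Λ (τ n (fun _ => x)), Ω n⟫_ℂ = ((p n / p 0 : ℝ) : ℂ) := by
      rw [key n, inner_smul_left, @inner_self_eq_norm_sq_to_K ℂ, hΩ.1 n]
      simp [Complex.conj_ofReal]
    have habs : ‖⟪Λ (τ n (fun _ => x)), Ω n⟫_ℂ‖ = p n / p 0 := by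
      rw [hin, Complex.norm_real, Real.norm_eq_abs, abs_of_pos (div_pos (hp n) (hp 0))]
    calc p n / p 0 = ‖⟪Λ (τ n (fun _ => x)), Ω n⟫_ℂ‖ := habs.symm
      _ = ‖⟪ιF (τ n (fun _ => x)), Λs (Ω n)⟫_ℂ‖ := by rw [hΛs]
      _ ≤ ‖ιF (τ n (fun _ => x))‖ * ‖Λs (Ω n)‖ := norm_inner_le_norm _ _
      _ = ‖x‖ ^ n * ‖Λs (Ω n)‖ := by rw [ιF.norm_map, hnorm]
  -- choose a large n and derive a contradiction
  obtain ⟨n, hn⟩ := exists_nat_ge (max (p 0 * ‖x‖) ‖x‖)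
  set m := n + 1 with hm
  have hxm : ‖x‖ ≤ (m : ℝ) := by
    have := le_max_right (p 0 * ‖x‖) ‖x‖
    rw [hm]; push_cast; linarith
  have hpm : p 0 * ‖x‖ ≤ (m : ℝ) := by
    have := le_max_left (p 0 * ‖x‖) ‖x‖
    rw [hm]; push_cast; linarith
  have hxpow : p 0 * ‖x‖ ^ m ≤ (m : ℝ) ^ m := by
    have h1 : ‖x‖ ^ n ≤ (m : ℝ) ^ n :=
      pow_le_pow_left₀ (norm_nonneg x) hxm n
    have h2 : (0:ℝ) ≤ ‖x‖ ^ n := pow_nonneg (norm_nonneg x) n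
    calc p 0 * ‖x‖ ^ m = (p 0 * ‖x‖) * ‖x‖ ^ n := by rw [hm, pow_succ]; ring
      _ ≤ (m : ℝ) * (m : ℝ) ^ n := by
          apply mul_le_mul hpm h1 h2
          positivity
      _ = (m : ℝ) ^ m := by rw [hm, pow_succ]; ring
  have hb1 := bound m
  have hr : (0:ℝ) ≤ ‖Λs (Ω m)‖ := norm_nonneg _
  have hfin : p m ≤ p 0 * (‖x‖ ^ m * ‖Λs (Ω m)‖) := by
    have := (div_le_iff₀ (hp 0)).mp hb1
    linarith [this]
  have hpm_def : p m = (m : ℝ) ^ m * ‖Λs (Ω m)‖ + 1 := rfl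
  nlinarith [mul_le_mul_of_nonneg_right hxpow hr, hp 0]
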